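/- Let 𝔫 be the 5-dimensional real Lie algebra l₅,₅ with orthonormal basis {E₁,…,E₅} and non-zero brackets [E₁,E₂] = m·E₄ + s·E₅, [E₁,E₃] = u·E₅, [E₁,E₄] = v·E₅, [E₂,E₃] = w·E₅, where s, u ≥ 0 and m, v, w > 0 (a three-step nilpotent Lie algebra with one-dimensional center). Then there exist c ∈ ℝ and a derivation D of 𝔫 with Ric = c·Id + D if and only if s = 0, u = 0, v = m and w = (√2/2)·m; moreover, in that case necessarily c = −(7/4)m². -/
import Mathlib


open scoped BigOperators

namespace Nilsoliton11

noncomputable section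

abbrev V : Type := Fin 5 → ℝ

/-- The orthonormal basis vectors E₁,…,E₅ (indexed 0,…,4). -/
def E (i : Fin 5) : V := Pi.single i 1

/-- The inner product making `E` an orthonormal basis. -/
def ip (x y : V) : ℝ := ∑ i, x i * y i

/-- `D` is a derivation of the bracket `br`. -/
def IsDerivation (br : V → V → V) (D : V →ₗ[ℝ] V) : Prop :=
  ∀ X Y : V, D (br X Y) = br (D X) Y + br X (D Y)

/-- `Ric` is the Ricci operator of the nilpotent Lie group with left-invariant
metric determined by the bracket `br` and the orthonormal basis `E`. -/
def IsRicci (br : V → V → V) (Ric : V →ₗ[ℝ] V) : Prop :=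
  ∀ X Y : V, ip (Ric X) Y =
      -(1/2) * (∑ i : Fin 5, ip (br X (E i)) (br Y (E i)))
      + (1/4) * (∑ i : Fin 5, ∑ j : Fin 5, ip (br (E i) (E j)) X * ip (br (E i) (E j)) Y)

/-- The bracket of l₅,₅: [E₁,E₂] = m·E₄ + s·E₅, [E₁,E₃] = u·E₅,
[E₁,E₄] = v·E₅, [E₂,E₃] = w·E₅. -/
def br (m s u v w : ℝ) (X Y : V) : V :=
  (m * (X 0 * Y 1 - X 1 * Y 0)) • E 3 + (s * (X 0 * Y 1 - X 1 * Y 0) + u * (X 0 * Y 2 - X 2 * Y 0) + v * (X 0 * Y 3 - X 3 * Y 0) + w * (X 1 * Y 2 - X 2 * Y 1)) • E 4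

/-- The matrix of the Ricci operator in the basis `E`. -/
def Rm (m s u v w : ℝ) : Fin 5 → Fin 5 → ℝ := fun a b =>
  !![-(m^2+s^2+u^2+v^2)/2, -(u*w)/2, s*w/2, 0, 0;
     -(u*w)/2, -(m^2+s^2+w^2)/2, -(s*u)/2, -(s*v)/2, 0;
     s*w/2, -(s*u)/2, -(u^2+w^2)/2, -(u*v)/2, 0;
     0, -(s*v)/2, -(u*v)/2, (m^2-v^2)/2, m*s/2;
     0, 0, 0, m*s/2, (s^2+u^2+v^2+w^2)/2] a b

lemma ip_E (x : V) (i : Fin 5) : ip x (E i) = x i := by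
  simp [ip, E, Pi.single_apply]

lemma ric_formula (m s u v w : ℝ) (Ric : V →ₗ[ℝ] V) (hRic : IsRicci (br m s u v w) Ric)
    (X : V) (b : Fin 5) : Ric X b = ∑ a, Rm m s u v w a b * X a := by
  have h := hRic X (E b)
  rw [ip_E] at h
  rw [h]
  fin_cases b <;>
    · simp [br, ip, E, Rm, Fin.sum_univ_five, Pi.single_apply, Matrix.vecHead, Matrix.vecTail]
      ring

lemma master (m s u v w : ℝ) (hm : 0 < m) (hv : 0 < v) (hw : 0 < w)
    (Ric : V →ₗ[ℝ] V) (hRic : IsRicci (br m s u v w) Ric)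
    (c : ℝ) (D : V →ₗ[ℝ] V) (hD : IsDerivation (br m s u v w) D)
    (hEq : Ric = c • (LinearMap.id : V →ₗ[ℝ] V) + D) :
    s = 0 ∧ u = 0 ∧ v = m ∧ w = (Real.sqrt 2 / 2) * m ∧ c = -(7/4) * m ^ 2 := by
  have hDX : ∀ X : V, D X = Ric X - c • X := by
    intro X
    have h : Ric X = (c • (LinearMap.id : V →ₗ[ℝ] V) + D) X := by rw [hEq]
    simp only [LinearMap.add_apply, LinearMap.smul_apply, LinearMap.id_coe, id_eq] at h
    rw [h]; abel
  have hDb : ∀ (X : V) (b : Fin 5), D X b = (∑ a, Rm m s u v w a b * X a) - c * X b := by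
    intro X b
    rw [hDX]
    simp [ric_formula m s u v w Ric hRic X b]
  have eS := congrFun (hD (E 0) (E 4)) 4
  have eU := congrFun (hD (E 0) (E 1)) 2
  have e1 := congrFun (hD (E 0) (E 1)) 3
  have e2 := congrFun (hD (E 0) (E 3)) 4
  have e3 := congrFun (hD (E 1) (E 2)) 4
  simp [hDb, br, E, Rm, Fin.sum_univ_five, Pi.single_apply, Matrix.vecHead, Matrix.vecTail] at eS eU e1 e2 e3
  have hs0 : s = 0 := by
    rcases eS with h | h | h
    · exact absurd h (ne_of_gt hv)
    · exact absurd h (ne_of_gt hm)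
    · exact h
  have hu0 : u = 0 := by
    rcases eU with (h | h) | h
    · exact h
    · exact absurd h (ne_of_gt hv)
    · exact absurd h (ne_of_gt hm)
  subst hs0; subst hu0
  have h1 : c + (3*m^2 + w^2)/2 = 0 := by
    have h : m * (c + (3*m^2 + w^2)/2) = 0 := by linear_combination e1
    exact (mul_eq_zero.mp h).resolve_left (ne_of_gt hm)
  have h2 : c + (3*v^2 + w^2)/2 = 0 := by
    have h : v * (c + (3*v^2 + w^2)/2) = 0 := by linear_combination e2
    exact (mul_eq_zero.mp h).resolve_left (ne_of_gt hv)
  have h3 : c + (m^2 + v^2 + 3*w^2)/2 = 0 := by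
    have h : w * (c + (m^2 + v^2 + 3*w^2)/2) = 0 := by linear_combination e3
    exact (mul_eq_zero.mp h).resolve_left (ne_of_gt hw)
  have hvm : v = m := by
    have h : (v - m) * (v + m) = 0 := by linear_combination (2/3 : ℝ) * h2 - (2/3 : ℝ) * h1
    rcases mul_eq_zero.mp h with h | h
    · linarith only [h]
    · linarith only [h, hv, hm]
  have hw2 : w^2 = m^2/2 := by
    rw [hvm] at h3
    linarith only [h1, h3]
  have hsq : Real.sqrt 2 ^ 2 = 2 := Real.sq_sqrt (by norm_num)
  have hwt : w = Real.sqrt 2 / 2 * m := by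
    have hpos : 0 < Real.sqrt 2 / 2 * m := by
      have : 0 < Real.sqrt 2 := Real.sqrt_pos.mpr (by norm_num)
      positivity
    have h : (w - Real.sqrt 2 / 2 * m) * (w + Real.sqrt 2 / 2 * m) = 0 := by
      linear_combination hw2 - (m^2/4) * hsq
    rcases mul_eq_zero.mp h with h | h
    · linarith only [h]
    · linarith only [h, hpos, hw]
  refine ⟨rfl, rfl, hvm, hwt, ?_⟩
  linarith only [h1, hw2]

lemma reverse (m w : ℝ) (hw2 : w^2 = m^2/2)
    (Ric : V →ₗ[ℝ] V) (hRic : IsRicci (br m 0 0 m w) Ric) :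
    ∃ (c : ℝ) (D : V →ₗ[ℝ] V), IsDerivation (br m 0 0 m w) D ∧
      Ric = c • (LinearMap.id : V →ₗ[ℝ] V) + D := by
  set d : Fin 5 → ℝ := ![3/4*m^2, m^2, 3/2*m^2, 7/4*m^2, 5/2*m^2] with hd
  refine ⟨-(7/4)*m^2, LinearMap.pi (fun i => d i • LinearMap.proj i), ?_, ?_⟩
  · intro X Y
    funext b
    fin_cases b <;>
        simp [br, E, Pi.single_apply, LinearMap.pi_apply, hd,
          Matrix.vecHead, Matrix.vecTail, smul_eq_mul] <;>
      ring
  · refine LinearMap.ext fun X => funext fun b => ?_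
    rw [ric_formula m 0 0 m w Ric hRic X b]
    fin_cases b <;>
        simp [Rm, Fin.sum_univ_five, LinearMap.pi_apply, hd,
          Matrix.vecHead, Matrix.vecTail, smul_eq_mul] <;>
      (first | ring1 | (rw [hw2]; ring))

theorem stmt11 (m s u v w : ℝ) (hs : 0 ≤ s) (hu : 0 ≤ u) (hm : 0 < m) (hv : 0 < v) (hw : 0 < w)
    (Ric : V →ₗ[ℝ] V) (hRic : IsRicci (br m s u v w) Ric) :
    ((∃ (c : ℝ) (D : V →ₗ[ℝ] V), IsDerivation (br m s u v w) D ∧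
        Ric = c • (LinearMap.id : V →ₗ[ℝ] V) + D) ↔ (s = 0 ∧ u = 0 ∧ v = m ∧ w = (Real.sqrt 2 / 2) * m)) ∧
    (∀ (c : ℝ) (D : V →ₗ[ℝ] V), IsDerivation (br m s u v w) D →
        Ric = c • (LinearMap.id : V →ₗ[ℝ] V) + D → c = -(7/4) * m ^ 2) := by
  constructor
  · constructor
    · rintro ⟨c, D, hD, hEq⟩
      obtain ⟨h1, h2, h3, h4, _⟩ := master m s u v w hm hv hw Ric hRic c D hD hEq
      exact ⟨h1, h2, h3, h4⟩
    · rintro ⟨rfl, rfl, hvm, hwt⟩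
      rw [hvm] at hRic ⊢
      subst hwt
      have hww : (Real.sqrt 2 / 2 * m)^2 = m^2/2 := by
        rw [mul_pow, div_pow, Real.sq_sqrt (by norm_num : (0:ℝ) ≤ 2)]
        ring
      exact reverse m _ hww Ric hRic
  · intro c D hD hEq
    exact (master m s u v w hm hv hw Ric hRic c D hD hEq).2.2.2.2

end

end Nilsoliton11
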